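/- Let N ≥ 1 and let k_1, …, k_N : (0,∞) → ℝ be locally square-integrable functions that are regularly varying at t = 0, i.e. there exist exponents H_1, …, H_N > 0, constants c_1, …, c_N ≠ 0 and slowly varying functions ℓ_1, …, ℓ_N : (0,∞) → (0,∞) such that lim_{t→0+} k_j(t) / (c_j t^{H_j − 1/2} ℓ_j(1/t)) = 1 for every j. Define the Gram matrix function G(h) with entries G_{ij}(h) = ∫_0^h k_i(r) k_j(r) dr for h > 0. If H_1, …, H_N are pairwise distinct, then liminf_{h→0+} λ_min(G(h)) / (h^{2 H_max} ℓ_min(1/h)^2) > 0, where H_max = max_{j} H_j, ℓ_min(x) = min_j ℓ_j(x), and λ_min denotes the smallest eigenvalue of the (symmetric positive semidefinite) matrix G(h). -/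

import Mathlib

open MeasureTheory Filter Set Matrix

/-- A measurable function `ℓ`, positive on `(0,∞)`, is slowly varying at infinity if
`ℓ(λ t)/ℓ(t) → 1` as `t → ∞`, for every `λ > 0`. -/
def SlowlyVarying (ℓ : ℝ → ℝ) : Prop :=
  Measurable ℓ ∧ ∀ lam : ℝ, 0 < lam →
    Filter.Tendsto (fun t => ℓ (lam * t) / ℓ t) Filter.atTop (nhds 1)

/-- The smallest eigenvalue of a real symmetric (positive semidefinite) matrix, expressed
as the infimum of `ξᵀ M ξ` over Euclidean unit vectors `ξ`. -/
noncomputable def lambdaMin {n : Type*} [Fintype n] (M : Matrix n n ℝ) : ℝ :=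
  sInf {r : ℝ | ∃ ξ : n → ℝ, (∑ i, ξ i ^ 2) = 1 ∧ r = ξ ⬝ᵥ M.mulVec ξ}

/-- powers `s^(b j)` with distinct exponents are linearly independent on (0,1). -/
lemma aux_pow_indep {m : ℕ} :
    ∀ (S : Finset (Fin m)) (γ b : Fin m → ℝ), Set.InjOn b S →
      (∀ s ∈ Ioo (0:ℝ) 1, ∑ j ∈ S, γ j * s ^ (b j) = 0) → ∀ j ∈ S, γ j = 0 := by
  intro S
  induction S using Finset.strongInduction with
  | _ S ih =>
    intro γ b hinj hsum j hj
    have hSne : S.Nonempty := ⟨j, hj⟩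
    obtain ⟨j₀, hj₀S, hj₀min⟩ := S.exists_min_image b hSne
    -- the rescaled sum tends to γ j₀ as s → 0+
    have key : γ j₀ = 0 := by
      have hlim : Tendsto (fun s : ℝ => ∑ i ∈ S, γ i * s ^ (b i - b j₀))
          (nhdsWithin 0 (Ioi 0)) (nhds (γ j₀)) := by
        have : γ j₀ = ∑ i ∈ S, (if i = j₀ then γ j₀ else 0) := by
          rw [Finset.sum_ite_eq' S j₀ (fun _ => γ j₀)]; simp [hj₀S]
        rw [this]
        refine tendsto_finset_sum _ (fun i hi => ?_)
        by_cases hij : i = j₀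
        · subst hij
          simp only [if_pos rfl, sub_self]
          have : ∀ s ∈ Ioi (0:ℝ), γ i * s ^ (0:ℝ) = γ i := by
            intro s hs; rw [Real.rpow_zero]; ring
          refine Tendsto.congr' ?_ (tendsto_const_nhds (x := γ i))
          filter_upwards [eventually_nhdsWithin_of_forall this] with s hs using hs.symm
        · simp only [if_neg hij]
          have hbi : 0 < b i - b j₀ := by
            rcases lt_or_eq_of_le (hj₀min i hi) with h | h
            · linarith
            · exact absurd (hinj hj₀S hi h) (Ne.symm hij)
          have h1 : Tendsto (fun s : ℝ => s ^ (b i - b j₀)) (nhdsWithin 0 (Ioi 0)) (nhds 0) := by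
            have := (Real.continuousAt_rpow_const 0 (b i - b j₀) (Or.inr hbi.le)).tendsto
            rw [Real.zero_rpow hbi.ne'] at this
            exact this.mono_left nhdsWithin_le_nhds
          have := h1.const_mul (γ i)
          simpa using this
      have hzero : Tendsto (fun s : ℝ => ∑ i ∈ S, γ i * s ^ (b i - b j₀))
          (nhdsWithin 0 (Ioi 0)) (nhds 0) := by
        have : ∀ s ∈ Ioo (0:ℝ) 1, ∑ i ∈ S, γ i * s ^ (b i - b j₀) = 0 := by
          intro s hs
          have h0 := hsum s hs
          have : ∑ i ∈ S, γ i * s ^ (b i - b j₀)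
              = (∑ i ∈ S, γ i * s ^ (b i)) * s ^ (-(b j₀)) := by
            rw [Finset.sum_mul]
            refine Finset.sum_congr rfl (fun i hi => ?_)
            rw [mul_assoc, ← Real.rpow_add hs.1]
            ring_nf
          rw [this, h0, zero_mul]
        have hmem : Ioo (0:ℝ) 1 ∈ nhdsWithin (0:ℝ) (Ioi 0) := by
          have := Ioo_mem_nhdsGT (show (0:ℝ) < 1 from one_pos)
          exact this
        exact Tendsto.congr' (by filter_upwards [hmem] with s hs using (this s hs).symm)
          tendsto_const_nhds
      exact tendsto_nhds_unique hlim hzero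
    by_cases hjj : j = j₀
    · rwa [hjj]
    · refine ih (S.erase j₀) (Finset.erase_ssubset hj₀S) γ b
        (hinj.mono (fun x hx => (Finset.mem_erase.mp hx).2)) ?_ j
        (Finset.mem_erase.mpr ⟨hjj, hj⟩)
      intro s hs
      have h0 := hsum s hs
      rw [← Finset.add_sum_erase S _ hj₀S, key, zero_mul, zero_add] at h0
      exact h0

lemma aux_cont_ae_zero {g : ℝ → ℝ} (hg : ∀ x ∈ Ioo (0:ℝ) 1, ContinuousAt g x)
    (h0 : ∀ᵐ x ∂(volume.restrict (Ioc (0:ℝ) 1)), g x = 0) :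
    ∀ x ∈ Ioo (0:ℝ) 1, g x = 0 := by
  intro x₀ hx₀
  by_contra hne
  have hev : ∀ᶠ y in nhds x₀, g y ≠ 0 := (hg x₀ hx₀).eventually_ne hne
  have hev2 : ∀ᶠ y in nhds x₀, y ∈ Ioo (0:ℝ) 1 := (isOpen_Ioo).eventually_mem hx₀
  obtain ⟨ε, hε, hball⟩ := Metric.eventually_nhds_iff.mp (hev.and hev2)
  have h0' : ∀ᵐ y ∂(volume : Measure ℝ), y ∈ Ioc (0:ℝ) 1 → g y = 0 :=
    (ae_restrict_iff' measurableSet_Ioc).mp h0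
  rw [ae_iff] at h0'
  have hsub : Metric.ball x₀ ε ⊆ {y | ¬(y ∈ Ioc (0:ℝ) 1 → g y = 0)} := by
    intro y hy
    have := hball (by simpa [Real.dist_eq] using mem_ball_iff_norm.mp hy)
    exact fun h => this.1 (h ⟨this.2.1, this.2.2.le⟩)
  have := measure_mono (μ := (volume : Measure ℝ)) hsub
  rw [h0'] at this
  simp only [nonpos_iff_eq_zero] at this
  rw [Real.volume_ball] at this
  exact absurd this (by positivity)

lemma aux_cov {F : ℝ → ℝ} {h : ℝ} (hh : 0 < h) :
    (∫ s in Ioc (0:ℝ) 1, F (h * s)) = h⁻¹ * ∫ r in Ioc 0 h, F r := by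
  rw [← intervalIntegral.integral_of_le (zero_le_one), ← intervalIntegral.integral_of_le hh.le]
  rw [intervalIntegral.integral_comp_mul_left F hh.ne']
  simp

lemma aux_cov_int {F : ℝ → ℝ} {h : ℝ} (hh : 0 < h) (hF : IntegrableOn F (Ioc 0 h)) :
    IntegrableOn (fun s => F (h * s)) (Ioc (0:ℝ) 1) := by
  rw [show IntegrableOn (fun s => F (h * s)) (Ioc (0:ℝ) 1) volume
      = Integrable ((Ioc (0:ℝ) 1).indicator (fun s => F (h * s))) volume from
    (propext (integrable_indicator_iff measurableSet_Ioc)).symm]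
  have : (Ioc (0:ℝ) 1).indicator (fun s => F (h * s))
      = fun s => ((Ioc (0:ℝ) h).indicator F) (h * s) := by
    funext s
    by_cases hs : s ∈ Ioc (0:ℝ) 1
    · rw [indicator_of_mem hs, indicator_of_mem]
      exact ⟨mul_pos hh hs.1, by nlinarith [hs.2]⟩
    · rw [indicator_of_notMem hs, indicator_of_notMem]
      intro hmem
      refine hs ⟨?_, by nlinarith [hmem.2]⟩
      nlinarith [hmem.1]
  rw [this]
  exact Integrable.comp_mul_left'
    ((integrable_indicator_iff measurableSet_Ioc).mpr hF) hh.ne'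

lemma aux_aesm {f : ℝ → ℝ} {δ e : ℝ}
    (hsq : AEStronglyMeasurable (fun t => f t ^ 2) (volume.restrict (Ioc 0 δ)))
    (hsign : ∀ t ∈ Ioc (0:ℝ) δ, 0 < e * f t) :
    AEStronglyMeasurable f (volume.restrict (Ioc 0 δ)) := by
  obtain ⟨g, hg_meas, hg_eq⟩ := hsq
  refine ⟨fun t => (if 0 < e then 1 else -1) * Real.sqrt (g t),
    (stronglyMeasurable_const.mul
      (Real.continuous_sqrt.comp_stronglyMeasurable hg_meas)), ?_⟩
  filter_upwards [hg_eq, ae_restrict_mem measurableSet_Ioc] with t h1 h2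
  have hs := hsign t h2
  have he : e ≠ 0 := by rintro rfl; simp at hs
  rw [← h1, Real.sqrt_sq_eq_abs]
  by_cases hpos : 0 < e
  · have : 0 < f t := by
      rcases mul_pos_iff.mp hs with h | h
      · exact h.2
      · exact absurd h.1 (not_lt.mpr hpos.le)
    rw [if_pos hpos, abs_of_pos this, one_mul]
  · have : f t < 0 := by
      rcases mul_pos_iff.mp hs with h | h
      · exact absurd h.1 hpos
      · exact h.2
    rw [if_neg hpos, abs_of_neg this]; ring

lemma aux_alg {h s Hj Hm cj lj lh Lh Binv ξ kk : ℝ} (hh : 0 < h) (hss : 0 < s)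
    (hcj : cj ≠ 0) (hlj : 0 < lj) (hlh : 0 < lh) (hLh : 0 < Lh) :
    (Binv * (ξ * cj * (h ^ Hj * lh) / (h ^ Hm * Lh))) * s ^ (Hj - 1/2) *
      (kk / (cj * (h*s) ^ (Hj - 1/2) * lj)) * (lj / lh)
    = Binv * (ξ * kk * h ^ ((1:ℝ)/2) / (h ^ Hm * Lh)) := by
  have h1 : (h*s) ^ (Hj - 1/2) = h ^ (Hj - 1/2) * s ^ (Hj-1/2) := Real.mul_rpow hh.le hss.le
  have h2 : h ^ Hj = h ^ (Hj - 1/2) * h ^ ((1:ℝ)/2) := by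
    rw [← Real.rpow_add hh]; ring_nf
  have hp1 : (0:ℝ) < h ^ (Hj - 1/2) := Real.rpow_pos_of_pos hh _
  have hp2 : (0:ℝ) < s ^ (Hj - 1/2) := Real.rpow_pos_of_pos hss _
  have hp3 : (0:ℝ) < h ^ Hm := Real.rpow_pos_of_pos hh _
  rw [h1, h2]
  field_simp

lemma aux_sq {B T p m L : ℝ} (hB : B ≠ 0) (hm : m ≠ 0) (hL : L ≠ 0) :
    (B⁻¹ * (T * p / (m * L)))^2 = T^2 * (p^2 / (m^2 * L^2) / B^2) := by
  field_simp

lemma aux_div {h q D B : ℝ} (hh : h ≠ 0) : h⁻¹ * q * (h / D / B) = q / D / B := by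
  field_simp

lemma aux_meas {m : ℕ} (γ b : Fin m → ℝ) :
    Measurable fun s : ℝ => ENNReal.ofReal ((∑ j, γ j * s ^ (b j))^2) := by
  measurability

set_option maxHeartbeats 2000000

/-- lower asymptotics of the smallest eigenvalue of the Gram matrix of
regularly varying kernels with pairwise distinct indices.  The conclusion
`liminf_{h→0+} λ_min(G(h)) / (h^{2 H_max} ℓ_min(1/h)²) > 0` is expressed equivalently as:
there is `C > 0` such that eventually, as `h → 0+`,
`C ≤ λ_min(G(h)) / (h^{2 H_max} ℓ_min(1/h)²)`. -/
theorem stmt0 (N : ℕ)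
    (k : Fin (N + 1) → ℝ → ℝ) (H : Fin (N + 1) → ℝ) (c : Fin (N + 1) → ℝ)
    (ℓ : Fin (N + 1) → ℝ → ℝ)
    (hH : ∀ j, 0 < H j) (hc : ∀ j, c j ≠ 0)
    (hℓpos : ∀ j, ∀ x : ℝ, 0 < x → 0 < ℓ j x)
    (hℓsv : ∀ j, SlowlyVarying (ℓ j))
    (hloc : ∀ j, ∀ T : ℝ, 0 < T → IntegrableOn (fun t => (k j t) ^ 2) (Ioc 0 T))
    (hreg : ∀ j, Tendsto
      (fun t => k j t / (c j * t ^ (H j - 1 / 2) * ℓ j (1 / t)))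
      (nhdsWithin 0 (Ioi 0)) (nhds 1))
    (hdist : Function.Injective H) :
    ∃ C > 0, ∀ᶠ h in nhdsWithin (0 : ℝ) (Ioi 0),
      C ≤ lambdaMin (Matrix.of fun i j : Fin (N + 1) => ∫ r in Ioc 0 h, k i r * k j r) /
          (h ^ (2 * Finset.univ.sup' Finset.univ_nonempty H) *
            (Finset.univ.inf' Finset.univ_nonempty fun j => ℓ j (1 / h)) ^ 2) := by
  classical
  by_contra hcon
  push_neg at hcon
  set Hmax : ℝ := Finset.univ.sup' Finset.univ_nonempty H with hHmax_def
  have hHmax_ge : ∀ j, H j ≤ Hmax := fun j => Finset.le_sup' H (Finset.mem_univ j)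
  have hHmax_pos : 0 < Hmax := by
    obtain ⟨j, _, hj⟩ := Finset.exists_mem_eq_sup' (Finset.univ_nonempty) H
    rw [hHmax_def, hj]; exact hH j
  have hLpos : ∀ h : ℝ, 0 < h →
      0 < Finset.univ.inf' Finset.univ_nonempty (fun j => ℓ j (1/h)) := by
    intro h hh
    obtain ⟨j, _, hj⟩ := Finset.exists_mem_eq_inf' (Finset.univ_nonempty) (fun j => ℓ j (1/h))
    rw [hj]; exact hℓpos j _ (one_div_pos.mpr hh)
  have hLle : ∀ (h:ℝ), ∀ j : Fin (N+1),
      Finset.univ.inf' Finset.univ_nonempty (fun j => ℓ j (1/h)) ≤ ℓ j (1/h) :=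
    fun h j => Finset.inf'_le _ (Finset.mem_univ j)
  -- choice of δ
  obtain ⟨δ, hδpos, hδ1, hδrat⟩ : ∃ δ : ℝ, 0 < δ ∧ δ ≤ 1 ∧ ∀ j, ∀ t ∈ Ioc (0:ℝ) δ,
      1/2 < k j t / (c j * t ^ (H j - 1/2) * ℓ j (1/t)) := by
    have h1 : ∀ j : Fin (N+1), ∃ d : ℝ, 0 < d ∧ ∀ t ∈ Ioo (0:ℝ) d,
        1/2 < k j t / (c j * t ^ (H j - 1/2) * ℓ j (1/t)) := by
      intro j
      have := (hreg j).eventually (eventually_gt_nhds (by norm_num : (1:ℝ)/2 < 1))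
      rw [(nhdsGT_basis (0:ℝ)).eventually_iff] at this
      obtain ⟨d, hd, hd2⟩ := this
      exact ⟨d, hd, fun t ht => hd2 ht⟩
    choose df hdf hdf2 using h1
    obtain ⟨j₀, _, hj₀⟩ := Finset.exists_mem_eq_inf' (Finset.univ_nonempty) df
    have hδ0pos : 0 < Finset.univ.inf' Finset.univ_nonempty df := by
      rw [hj₀]; exact hdf j₀
    refine ⟨min (Finset.univ.inf' Finset.univ_nonempty df) 1 / 2, div_pos (lt_min hδ0pos one_pos) two_pos, ?_, ?_⟩
    · have := min_le_right (Finset.univ.inf' Finset.univ_nonempty df) 1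
      linarith
    · intro j t ht
      refine hdf2 j t ⟨ht.1, lt_of_le_of_lt ht.2 ?_⟩
      have h2 : min (Finset.univ.inf' Finset.univ_nonempty df) 1
          ≤ Finset.univ.inf' Finset.univ_nonempty df := min_le_left _ _
      have h3 : Finset.univ.inf' Finset.univ_nonempty df ≤ df j :=
        Finset.inf'_le _ (Finset.mem_univ j)
      have h4 : 0 < min (Finset.univ.inf' Finset.univ_nonempty df) 1 :=
        lt_min hδ0pos one_pos
      linarith
  -- sign and measurability
  have hsign : ∀ j, ∀ t ∈ Ioc (0:ℝ) δ, 0 < c j * k j t := by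
    intro j t ht
    have h1 := hδrat j t ht
    have hp : (0:ℝ) < t ^ (H j - 1/2) := Real.rpow_pos_of_pos ht.1 _
    have hl : (0:ℝ) < ℓ j (1/t) := hℓpos j _ (one_div_pos.mpr ht.1)
    have h3 : (0:ℝ) < k j t / (c j * t ^ (H j - 1/2) * ℓ j (1/t)) := by linarith
    have hd : c j * t ^ (H j - 1/2) * ℓ j (1/t) ≠ 0 :=
      mul_ne_zero (mul_ne_zero (hc j) hp.ne') hl.ne'
    have h4 : c j * k j t = (k j t / (c j * t ^ (H j - 1/2) * ℓ j (1/t)))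
        * (c j * c j * (t ^ (H j - 1/2) * ℓ j (1/t))) := by
      rw [div_mul_eq_mul_div, eq_div_iff hd]
      ring
    rw [h4]
    exact mul_pos h3 (mul_pos (mul_self_pos.mpr (hc j)) (mul_pos hp hl))
  have hkmeas : ∀ (h:ℝ), 0 < h → h ≤ δ → ∀ j,
      AEStronglyMeasurable (k j) (volume.restrict (Ioc 0 h)) := by
    intro h hh hhδ j
    exact (aux_aesm ((hloc j δ hδpos).aestronglyMeasurable) (hsign j)).mono_measure
      (Measure.restrict_mono (Ioc_subset_Ioc le_rfl hhδ) le_rfl)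
  have hprod : ∀ (h:ℝ), 0 < h → h ≤ δ → ∀ i j,
      IntegrableOn (fun t => k i t * k j t) (Ioc 0 h) := by
    intro h hh hhδ i j
    refine Integrable.mono' (((hloc i h hh).add (hloc j h hh)).const_mul (1/2))
      ((hkmeas h hh hhδ i).mul (hkmeas h hh hhδ j))
      (Filter.Eventually.of_forall (fun t => ?_))
    rw [Real.norm_eq_abs, abs_mul]
    simp only [Pi.add_apply]
    nlinarith [sq_nonneg (|k i t| - |k j t|), sq_abs (k i t), sq_abs (k j t),
      abs_nonneg (k i t), abs_nonneg (k j t)]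
  -- quadratic form identity
  have hquad : ∀ (h:ℝ), 0 < h → h ≤ δ → ∀ ξ : Fin (N+1) → ℝ,
      ξ ⬝ᵥ (Matrix.of fun i j : Fin (N+1) => ∫ r in Ioc 0 h, k i r * k j r).mulVec ξ
        = ∫ r in Ioc 0 h, (∑ j, ξ j * k j r)^2 := by
    intro h hh hhδ ξ
    have hint : ∀ i j : Fin (N+1),
        IntegrableOn (fun r => ξ i * k i r * (ξ j * k j r)) (Ioc 0 h) := by
      intro i j
      have h1 := (hprod h hh hhδ i j).const_mul (ξ i * ξ j)
      refine h1.congr (Filter.Eventually.of_forall (fun r => by ring))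
    have hexp : ∀ r : ℝ, (∑ j, ξ j * k j r)^2
        = ∑ i, ∑ j, ξ i * k i r * (ξ j * k j r) := by
      intro r
      rw [sq, Finset.sum_mul_sum]
    have hR : ∫ r in Ioc 0 h, (∑ j, ξ j * k j r)^2
        = ∑ i, ∑ j, ∫ r in Ioc 0 h, ξ i * k i r * (ξ j * k j r) := by
      rw [integral_congr_ae (Filter.Eventually.of_forall hexp)]
      rw [integral_finset_sum _ (fun i _ => integrable_finset_sum _ (fun j _ => hint i j))]
      exact Finset.sum_congr rfl (fun i _ => integral_finset_sum _ (fun j _ => hint i j))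
    rw [hR]
    simp only [dotProduct, Matrix.mulVec, Matrix.of_apply, Finset.mul_sum]
    refine Finset.sum_congr rfl (fun i _ => Finset.sum_congr rfl (fun j _ => ?_))
    have : ∫ r in Ioc 0 h, ξ i * k i r * (ξ j * k j r)
        = (ξ i * ξ j) * ∫ r in Ioc 0 h, k i r * k j r := by
      rw [← integral_const_mul]
      exact integral_congr_ae (Filter.Eventually.of_forall (fun r => by ring))
    rw [this]
    ring
  have hquad_nonneg : ∀ (h:ℝ), 0 < h → h ≤ δ → ∀ ξ : Fin (N+1) → ℝ,
      0 ≤ ξ ⬝ᵥ (Matrix.of fun i j : Fin (N+1) => ∫ r in Ioc 0 h, k i r * k j r).mulVec ξ := by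
    intro h hh hhδ ξ
    rw [hquad h hh hhδ ξ]
    exact integral_nonneg (fun r => sq_nonneg _)
  -- extraction from lambdaMin
  have hlam : ∀ (h:ℝ), 0 < h → h ≤ δ → ∀ a : ℝ,
      lambdaMin (Matrix.of fun i j : Fin (N+1) => ∫ r in Ioc 0 h, k i r * k j r) < a →
      ∃ ξ : Fin (N+1) → ℝ, (∑ i, ξ i ^2) = 1 ∧
        ξ ⬝ᵥ (Matrix.of fun i j : Fin (N+1) => ∫ r in Ioc 0 h, k i r * k j r).mulVec ξ < a := by
    intro h hh hhδ a ha
    set M := Matrix.of fun i j : Fin (N+1) => ∫ r in Ioc 0 h, k i r * k j r with hM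
    have hne : {r : ℝ | ∃ ξ : Fin (N+1) → ℝ, (∑ i, ξ i ^ 2) = 1 ∧ r = ξ ⬝ᵥ M.mulVec ξ}.Nonempty := by
      refine ⟨_, ⟨Pi.single 0 1, ?_, rfl⟩⟩
      simp [Pi.single_apply]
    have hbdd : BddBelow {r : ℝ | ∃ ξ : Fin (N+1) → ℝ, (∑ i, ξ i ^ 2) = 1 ∧ r = ξ ⬝ᵥ M.mulVec ξ} := by
      refine ⟨0, fun r hr => ?_⟩
      obtain ⟨ξ, hξ1, rfl⟩ := hr
      exact hquad_nonneg h hh hhδ ξ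
    rw [lambdaMin] at ha
    obtain ⟨r, hrmem, hr⟩ := (csInf_lt_iff hbdd hne).mp ha
    obtain ⟨ξ, hξ1, rfl⟩ := hrmem
    exact ⟨ξ, hξ1, hr⟩
  -- pick the sequence h_n
  have hpick : ∀ n : ℕ, ∃ h : ℝ, (0 < h ∧ h < 1/((n:ℝ)+1)) ∧ h ≤ δ ∧
      lambdaMin (Matrix.of fun i j : Fin (N+1) => ∫ r in Ioc 0 h, k i r * k j r) /
          (h ^ (2 * Hmax) *
            (Finset.univ.inf' Finset.univ_nonempty fun j => ℓ j (1 / h)) ^ 2) < 1/((n:ℝ)+1) := by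
    intro n
    have hC : (0:ℝ) < 1/((n:ℝ)+1) := by positivity
    have hfreq := hcon (1/((n:ℝ)+1)) hC
    have hmem : Ioo (0:ℝ) (min δ (1/((n:ℝ)+1))) ∈ nhdsWithin (0:ℝ) (Ioi 0) :=
      Ioo_mem_nhdsGT (lt_min hδpos hC)
    obtain ⟨h, hmemh, hlth⟩ := (hfreq.and_eventually (eventually_of_mem hmem (fun x hx => hx))).exists
    exact ⟨h, ⟨hlth.1, lt_of_lt_of_le hlth.2 (min_le_right _ _)⟩,
      (lt_of_lt_of_le hlth.2 (min_le_left _ _)).le, hmemh⟩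
  choose hs hs1 hs2 hs3 using hpick
  have hhpos : ∀ n, 0 < hs n := fun n => (hs1 n).1
  have hhδ : ∀ n, hs n ≤ δ := hs2
  have hh1 : ∀ n, hs n ≤ 1 := fun n => le_trans (hs2 n) hδ1
  set Ln : ℕ → ℝ := fun n => Finset.univ.inf' Finset.univ_nonempty (fun j => ℓ j (1/(hs n)))
    with hLn_def
  have hLnpos : ∀ n, 0 < Ln n := fun n => hLpos (hs n) (hhpos n)
  have hLnle : ∀ n j, Ln n ≤ ℓ j (1/(hs n)) := fun n j => hLle (hs n) j
  set Dn : ℕ → ℝ := fun n => (hs n) ^ (2*Hmax) * (Ln n)^2 with hDn_def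
  have hDnpos : ∀ n, 0 < Dn n := fun n =>
    mul_pos (Real.rpow_pos_of_pos (hhpos n) _) (pow_pos (hLnpos n) 2)
  have hs3' : ∀ n, lambdaMin (Matrix.of fun i j : Fin (N+1) =>
      ∫ r in Ioc 0 (hs n), k i r * k j r) / Dn n < 1/((n:ℝ)+1) := fun n => hs3 n
  have hξex : ∀ n : ℕ, ∃ ξ : Fin (N+1) → ℝ, (∑ i, ξ i ^2) = 1 ∧
      ξ ⬝ᵥ (Matrix.of fun i j : Fin (N+1) => ∫ r in Ioc 0 (hs n), k i r * k j r).mulVec ξ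
        < (1/((n:ℝ)+1)) * Dn n := by
    intro n
    refine hlam (hs n) (hhpos n) (hhδ n) _ ?_
    have h1 := hs3' n
    rw [div_lt_iff₀ (hDnpos n)] at h1
    exact h1
  choose ξ hξunit hξlt using hξex
  set q : ℕ → ℝ := fun n => ξ n ⬝ᵥ (Matrix.of fun i j : Fin (N+1) =>
    ∫ r in Ioc 0 (hs n), k i r * k j r).mulVec (ξ n) with hq_def
  have hq0 : ∀ n, 0 ≤ q n := fun n => hquad_nonneg _ (hhpos n) (hhδ n) (ξ n)
  have hqI : ∀ n, q n = ∫ r in Ioc 0 (hs n), (∑ j, ξ n j * k j r)^2 :=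
    fun n => hquad _ (hhpos n) (hhδ n) (ξ n)
  set A : ℕ → ℝ := fun n => q n / Dn n with hA_def
  have hA0 : ∀ n, 0 ≤ A n := fun n => div_nonneg (hq0 n) (hDnpos n).le
  have hAlt : ∀ n, A n < 1/((n:ℝ)+1) := fun n => (div_lt_iff₀ (hDnpos n)).mpr (hξlt n)
  have hAtend : Tendsto A atTop (nhds 0) :=
    tendsto_of_tendsto_of_tendsto_of_le_of_le tendsto_const_nhds
      tendsto_one_div_add_atTop_nhds_zero_nat hA0 (fun n => (hAlt n).le)
  have hhtend : Tendsto hs atTop (nhdsWithin (0:ℝ) (Ioi 0)) := by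
    rw [tendsto_nhdsWithin_iff]
    exact ⟨tendsto_of_tendsto_of_tendsto_of_le_of_le tendsto_const_nhds
      tendsto_one_div_add_atTop_nhds_zero_nat (fun n => (hhpos n).le)
      (fun n => ((hs1 n).2).le), Filter.Eventually.of_forall (fun n => hhpos n)⟩
  -- the rescaled coefficient vectors
  set β : ℕ → Fin (N+1) → ℝ := fun n j =>
    ξ n j * c j * ((hs n) ^ (H j) * ℓ j (1/(hs n))) / ((hs n) ^ Hmax * Ln n) with hβ_def
  set B : ℕ → ℝ := fun n => ‖β n‖ with hB_def
  set cmin : ℝ := Finset.univ.inf' Finset.univ_nonempty (fun j => |c j|) with hcmin_def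
  have hcminpos : 0 < cmin := by
    obtain ⟨j,_,hj⟩ := Finset.exists_mem_eq_inf' Finset.univ_nonempty (fun j => |c j|)
    rw [hcmin_def, hj]; exact abs_pos.mpr (hc j)
  have hN1 : (0:ℝ) < (N:ℝ)+1 := by positivity
  have hsqrtpos : 0 < Real.sqrt ((N:ℝ)+1) := Real.sqrt_pos.mpr hN1
  have hδ0pos : 0 < cmin / Real.sqrt ((N:ℝ)+1) := div_pos hcminpos hsqrtpos
  have hBlb : ∀ n, cmin / Real.sqrt ((N:ℝ)+1) ≤ B n := by
    intro n
    obtain ⟨j, hj⟩ : ∃ j, 1 ≤ ((N:ℝ)+1) * (ξ n j)^2 := by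
      by_contra hno
      push_neg at hno
      have hlt := Finset.sum_lt_sum_of_nonempty (Finset.univ_nonempty
        (α := Fin (N+1))) (fun j _ => hno j)
      rw [← Finset.mul_sum, hξunit n, mul_one, Finset.sum_const, Finset.card_univ,
        Fintype.card_fin, nsmul_eq_mul] at hlt
      push_cast at hlt
      linarith
    have h1 : 1/Real.sqrt ((N:ℝ)+1) ≤ |ξ n j| := by
      have h2 : (1:ℝ)/((N:ℝ)+1) ≤ (ξ n j)^2 := by
        rw [div_le_iff₀ hN1]
        nlinarith
      calc 1/Real.sqrt ((N:ℝ)+1) = Real.sqrt (1/((N:ℝ)+1)) := by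
            rw [one_div, one_div, Real.sqrt_inv]
        _ ≤ Real.sqrt ((ξ n j)^2) := Real.sqrt_le_sqrt h2
        _ = |ξ n j| := Real.sqrt_sq_eq_abs _
    have hpj : (0:ℝ) < (hs n) ^ (H j) := Real.rpow_pos_of_pos (hhpos n) _
    have hpm : (0:ℝ) < (hs n) ^ Hmax := Real.rpow_pos_of_pos (hhpos n) _
    have hlj : (0:ℝ) < ℓ j (1/(hs n)) := hℓpos j _ (one_div_pos.mpr (hhpos n))
    have hfrac : 1 ≤ ((hs n)^(H j) * ℓ j (1/(hs n))) / ((hs n)^Hmax * Ln n) := by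
      rw [le_div_iff₀ (mul_pos hpm (hLnpos n)), one_mul]
      exact mul_le_mul (Real.rpow_le_rpow_of_exponent_ge (hhpos n) (hh1 n) (hHmax_ge j))
        (hLnle n j) (hLnpos n).le hpj.le
    have hβj : cmin / Real.sqrt ((N:ℝ)+1) ≤ |β n j| := by
      have habs : |β n j| = |ξ n j| * |c j|
          * (((hs n)^(H j) * ℓ j (1/(hs n))) / ((hs n)^Hmax * Ln n)) := by
        rw [hβ_def]
        rw [abs_div, abs_mul, abs_mul,
          abs_of_pos (mul_pos hpj hlj), abs_of_pos (mul_pos hpm (hLnpos n))]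
        ring
      rw [habs]
      have hcj : cmin ≤ |c j| := Finset.inf'_le _ (Finset.mem_univ j)
      calc cmin / Real.sqrt ((N:ℝ)+1) = (1/Real.sqrt ((N:ℝ)+1)) * cmin * 1 := by ring
        _ ≤ |ξ n j| * |c j|
            * (((hs n)^(H j) * ℓ j (1/(hs n))) / ((hs n)^Hmax * Ln n)) := by
          refine mul_le_mul (mul_le_mul h1 hcj hcminpos.le (abs_nonneg _)) hfrac zero_le_one ?_
          positivity
    refine le_trans hβj ?_
    have := norm_le_pi_norm (β n) j
    rwa [Real.norm_eq_abs] at this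
  have hBpos : ∀ n, 0 < B n := fun n => lt_of_lt_of_le hδ0pos (hBlb n)
  -- compact subsequence
  have hγmem : ∀ n, (B n)⁻¹ • β n ∈ Metric.sphere (0 : Fin (N+1) → ℝ) 1 := by
    intro n
    rw [mem_sphere_zero_iff_norm, norm_smul, norm_inv, Real.norm_eq_abs,
      abs_of_pos (hBpos n)]
    exact inv_mul_cancel₀ (hBpos n).ne'
  obtain ⟨γ, hγs, φ, hφmono, hγtend⟩ :=
    (isCompact_sphere (0 : Fin (N+1) → ℝ) 1).tendsto_subseq hγmem
  have hγcoord : ∀ j, Tendsto (fun n => (B (φ n))⁻¹ * β (φ n) j) atTop (nhds (γ j)) := by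
    intro j
    have := (tendsto_pi_nhds.mp hγtend) j
    simpa [Pi.smul_apply, smul_eq_mul] using this
  -- the normalized functions W and their pointwise limits
  set W : ℕ → ℝ → ℝ := fun n s =>
    (B n)⁻¹ * ((∑ j, ξ n j * k j (hs n * s)) * (hs n) ^ ((1:ℝ)/2) / ((hs n) ^ Hmax * Ln n))
    with hW_def
  have hW_eq : ∀ n, ∀ s : ℝ, 0 < s → W n s = ∑ j,
      ((B n)⁻¹ * β n j) * s ^ (H j - 1/2)
        * (k j (hs n * s) / (c j * (hs n * s) ^ (H j - 1/2) * ℓ j (1/(hs n * s))))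
        * (ℓ j (1/(hs n * s)) / ℓ j (1/(hs n))) := by
    intro n s hss
    have hterm : ∀ j : Fin (N+1),
        ((B n)⁻¹ * β n j) * s ^ (H j - 1/2)
          * (k j (hs n * s) / (c j * (hs n * s) ^ (H j - 1/2) * ℓ j (1/(hs n * s))))
          * (ℓ j (1/(hs n * s)) / ℓ j (1/(hs n)))
        = (B n)⁻¹ * (ξ n j * k j (hs n * s) * (hs n) ^ ((1:ℝ)/2) / ((hs n) ^ Hmax * Ln n)) := by
      intro j
      exact aux_alg (hhpos n) hss (hc j)
        (hℓpos j _ (one_div_pos.mpr (mul_pos (hhpos n) hss)))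
        (hℓpos j _ (one_div_pos.mpr (hhpos n))) (hLnpos n)
    rw [Finset.sum_congr rfl (fun j _ => hterm j), ← Finset.mul_sum]
    show W n s = (B n)⁻¹ * ∑ j, ξ n j * k j (hs n * s) * (hs n) ^ ((1:ℝ)/2) / ((hs n) ^ Hmax * Ln n)
    rw [hW_def]
    congr 1
    rw [← Finset.sum_div, ← Finset.sum_mul]
  have hpoint : ∀ s : ℝ, s ∈ Ioc (0:ℝ) 1 →
      Tendsto (fun n => W (φ n) s) atTop (nhds (∑ j, γ j * s ^ (H j - 1/2))) := by
    intro s hsmem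
    have hss : 0 < s := hsmem.1
    have hbase : Tendsto (fun n => hs (φ n)) atTop (nhdsWithin (0:ℝ) (Ioi 0)) :=
      hhtend.comp (hφmono.tendsto_atTop)
    have hmul : Tendsto (fun n => hs (φ n) * s) atTop (nhdsWithin (0:ℝ) (Ioi 0)) := by
      rw [tendsto_nhdsWithin_iff]
      constructor
      · have h2 := ((tendsto_nhdsWithin_iff.mp hbase).1).mul_const s
        simpa using h2
      · exact Filter.Eventually.of_forall (fun n => mul_pos (hhpos (φ n)) hss)
    have hinv : Tendsto (fun n => 1/(hs (φ n))) atTop atTop := by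
      simpa [one_div, Pi.inv_def] using hbase.inv_tendsto_nhdsGT_zero
    have hu : ∀ j : Fin (N+1), Tendsto (fun n => k j (hs (φ n) * s)
        / (c j * (hs (φ n) * s) ^ (H j - 1/2) * ℓ j (1/(hs (φ n) * s)))) atTop (nhds 1) :=
      fun j => (hreg j).comp hmul
    have hv : ∀ j : Fin (N+1), Tendsto (fun n => ℓ j (1/(hs (φ n) * s)) / ℓ j (1/(hs (φ n))))
        atTop (nhds 1) := by
      intro j
      have harg : ∀ n, 1/(hs (φ n) * s) = (1/s) * (1/(hs (φ n))) := by
        intro n; rw [one_div, mul_inv, mul_comm, one_div, one_div]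
      have h2 := ((hℓsv j).2 (1/s) (one_div_pos.mpr hss)).comp hinv
      refine Tendsto.congr (fun n => ?_) h2
      show ℓ j ((1/s) * (1/(hs (φ n)))) / ℓ j (1/(hs (φ n))) = _
      rw [harg n]
    have hsum := tendsto_finset_sum Finset.univ
      (fun (j : Fin (N+1)) (_ : j ∈ Finset.univ) =>
        (((hγcoord j).mul_const (s ^ (H j - 1/2))).mul (hu j)).mul (hv j))
    have hsum' : Tendsto (fun n => ∑ j,
        ((B (φ n))⁻¹ * β (φ n) j) * s ^ (H j - 1/2)
          * (k j (hs (φ n) * s) / (c j * (hs (φ n) * s) ^ (H j - 1/2) * ℓ j (1/(hs (φ n) * s))))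
          * (ℓ j (1/(hs (φ n) * s)) / ℓ j (1/(hs (φ n))))) atTop
        (nhds (∑ j, γ j * s ^ (H j - 1/2))) := by
      simpa using hsum
    exact Tendsto.congr (fun n => (hW_eq (φ n) s hss).symm) hsum'
  -- the integrands Φ
  set Φ : ℕ → ℝ → ℝ := fun n s =>
    (∑ j, ξ n j * k j (hs n * s))^2 * (hs n / Dn n / (B n)^2) with hΦ_def
  have hWΦ : ∀ n, ∀ s : ℝ, 0 < s → W n s ^ 2 = Φ n s := by
    intro n s hss
    have e1 : ((hs n) ^ ((1:ℝ)/2))^2 = hs n := by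
      rw [← Real.rpow_natCast ((hs n) ^ ((1:ℝ)/2)) 2, ← Real.rpow_mul (hhpos n).le]
      norm_num
    have e2 : ((hs n) ^ Hmax)^2 = (hs n) ^ (2*Hmax) := by
      rw [← Real.rpow_natCast ((hs n) ^ Hmax) 2, ← Real.rpow_mul (hhpos n).le]
      ring_nf
    have e3 : hs n / Dn n / (B n)^2
        = ((hs n) ^ ((1:ℝ)/2))^2 / (((hs n) ^ Hmax)^2 * (Ln n)^2) / (B n)^2 := by
      rw [hDn_def, e1, e2]
    show ((B n)⁻¹ * ((∑ j, ξ n j * k j (hs n * s)) * (hs n) ^ ((1:ℝ)/2)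
        / ((hs n) ^ Hmax * Ln n)))^2
      = (∑ j, ξ n j * k j (hs n * s))^2 * (hs n / Dn n / (B n)^2)
    rw [e3]
    exact aux_sq (hBpos n).ne' (Real.rpow_pos_of_pos (hhpos n) _).ne' (hLnpos n).ne'
  have hFint : ∀ n, IntegrableOn (fun r => (∑ j, ξ n j * k j r)^2) (Ioc 0 (hs n)) := by
    intro n
    have heq : (fun r => (∑ j, ξ n j * k j r)^2)
        = fun r => ∑ i, ∑ j, (ξ n i * ξ n j) * (k i r * k j r) := by
      funext r
      rw [sq, Finset.sum_mul_sum]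
      exact Finset.sum_congr rfl (fun i _ => Finset.sum_congr rfl (fun j _ => by ring))
    rw [heq]
    exact integrable_finset_sum _ (fun i _ => integrable_finset_sum _
      (fun j _ => (hprod _ (hhpos n) (hhδ n) i j).const_mul _))
  have hΦint : ∀ n, IntegrableOn (Φ n) (Ioc (0:ℝ) 1) := by
    intro n
    have h1 := aux_cov_int (F := fun r => (∑ j, ξ n j * k j r)^2) (hhpos n) (hFint n)
    exact h1.mul_const _
  have hΦeq : ∀ n, ∫ s in Ioc (0:ℝ) 1, Φ n s = A n / (B n)^2 := by
    intro n
    have h1 : ∫ s in Ioc (0:ℝ) 1, Φ n s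
        = (∫ s in Ioc (0:ℝ) 1, (∑ j, ξ n j * k j (hs n * s))^2) * (hs n / Dn n / (B n)^2) :=
      integral_mul_const _ _
    rw [h1, aux_cov (F := fun r => (∑ j, ξ n j * k j r)^2) (hhpos n), ← hqI n]
    show (hs n)⁻¹ * q n * (hs n / Dn n / (B n)^2) = q n / Dn n / (B n)^2
    exact aux_div (hhpos n).ne'
  -- Fatou's lemma
  have hlim0 : Tendsto (fun n => A (φ n) / (B (φ n))^2) atTop (nhds 0) := by
    have hA' : Tendsto (fun n => A (φ n)) atTop (nhds 0) := hAtend.comp hφmono.tendsto_atTop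
    have hb : ∀ n, A (φ n) / (B (φ n))^2 ≤ A (φ n) / (cmin / Real.sqrt ((N:ℝ)+1))^2 :=
      fun n => div_le_div_of_nonneg_left (hA0 _) (pow_pos hδ0pos 2)
        (pow_le_pow_left₀ hδ0pos.le (hBlb (φ n)) 2)
    refine tendsto_of_tendsto_of_tendsto_of_le_of_le tendsto_const_nhds ?_
      (fun n => div_nonneg (hA0 _) (sq_nonneg _)) hb
    have h2 := hA'.div_const ((cmin / Real.sqrt ((N:ℝ)+1))^2)
    simpa using h2
  have hmeasΦ : ∀ n, AEMeasurable (fun s => ENNReal.ofReal (Φ (φ n) s))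
      (volume.restrict (Ioc (0:ℝ) 1)) := fun n =>
    ENNReal.measurable_ofReal.comp_aemeasurable (hΦint (φ n)).aemeasurable
  have hFatou := lintegral_liminf_le' (u := atTop) hmeasΦ
  have hΦnn : ∀ n, ∀ s : ℝ, 0 ≤ Φ n s := fun n s =>
    mul_nonneg (sq_nonneg _)
      (div_nonneg (div_nonneg (hhpos n).le (hDnpos n).le) (sq_nonneg _))
  have hlint : ∀ n, ∫⁻ s in Ioc (0:ℝ) 1, ENNReal.ofReal (Φ (φ n) s)
      = ENNReal.ofReal (A (φ n) / (B (φ n))^2) := by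
    intro n
    rw [← ofReal_integral_eq_lintegral_ofReal (hΦint (φ n))
      (Filter.Eventually.of_forall (fun s => hΦnn (φ n) s)), hΦeq (φ n)]
  have hliminf_rhs : Filter.liminf (fun n => ∫⁻ s in Ioc (0:ℝ) 1,
      ENNReal.ofReal (Φ (φ n) s)) atTop = 0 := by
    have h3 := (ENNReal.continuous_ofReal.tendsto 0).comp hlim0
    rw [ENNReal.ofReal_zero] at h3
    exact (Tendsto.congr (fun n => (hlint n).symm) h3).liminf_eq
  set g : ℝ → ℝ := fun s => ∑ j, γ j * s ^ (H j - 1/2) with hg_def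
  have hlhs : ∫⁻ s in Ioc (0:ℝ) 1, ENNReal.ofReal (g s ^ 2)
      ≤ ∫⁻ s in Ioc (0:ℝ) 1, Filter.liminf (fun n => ENNReal.ofReal (Φ (φ n) s)) atTop := by
    refine lintegral_mono_ae ?_
    filter_upwards [ae_restrict_mem measurableSet_Ioc] with s hsmem
    have h1 : Tendsto (fun n => Φ (φ n) s) atTop (nhds (g s ^ 2)) := by
      have h2 := (hpoint s hsmem).pow 2
      exact Tendsto.congr (fun n => hWΦ (φ n) s hsmem.1) h2
    have h3 : Tendsto (fun n => ENNReal.ofReal (Φ (φ n) s)) atTop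
        (nhds (ENNReal.ofReal (g s^2))) := (ENNReal.continuous_ofReal.tendsto _).comp h1
    exact le_of_eq h3.liminf_eq.symm
  have hzero : ∫⁻ s in Ioc (0:ℝ) 1, ENNReal.ofReal (g s ^ 2) = 0 :=
    le_antisymm ((hlhs.trans hFatou).trans_eq hliminf_rhs) (zero_le')
  -- conclude g = 0 a.e., hence γ = 0, contradiction
  have hae := (lintegral_eq_zero_iff'
    ((aux_meas γ (fun j => H j - 1/2)).aemeasurable)).mp hzero
  have hae2 : ∀ᵐ s ∂(volume.restrict (Ioc (0:ℝ) 1)), g s = 0 := by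
    filter_upwards [hae] with s hsz
    have h4 : ENNReal.ofReal (g s^2) = 0 := hsz
    rw [ENNReal.ofReal_eq_zero] at h4
    nlinarith [sq_nonneg (g s)]
  have hg0 : ∀ x ∈ Ioo (0:ℝ) 1, g x = 0 := by
    refine aux_cont_ae_zero ?_ hae2
    intro x hx
    rw [hg_def]
    exact tendsto_finset_sum _ (fun j _ => Tendsto.mul tendsto_const_nhds
      (Real.continuousAt_rpow_const x _ (Or.inl (ne_of_gt hx.1))))
  have hγ0 : ∀ j, γ j = 0 := by
    intro j
    refine aux_pow_indep Finset.univ γ (fun j => H j - 1/2) ?_ ?_ j (Finset.mem_univ j)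
    · intro a _ b _ hab
      exact hdist (by linarith)
    · intro s hs'
      exact hg0 s hs'
  have hγz : γ = 0 := funext (fun j => hγ0 j)
  rw [mem_sphere_zero_iff_norm, hγz, norm_zero] at hγs
  exact one_ne_zero hγs.symm
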